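/- arXiv:2107.12123 — 2 statements merged into one kernel-verified Lean document; each statement's English description precedes it below -/
import Mathlib

section
/- Let χ₁ be an odd Dirichlet character mod n, m prime with gcd(n,m) = 1, and α a nonzero value of the Legendre symbol χ₂ mod m. Then Σ_{1≤a≤nm, χ₂(a)=α} χ₁(a)·a = m·Σ_{k=0}^{n−1} k·Σ_{a=1}^{n} χ₁(a + k·[m]_n)·σ(a,α), where σ(a,α) = #{1 ≤ l ≤ m : χ₂(l) = α and l ≡ a (mod n)} and [m]_n is the least nonnegative residue of m mod n. -/
open scoped Classical

open Finset


lemma reindex_sum (n m : ℕ) (hn : 0 < n) (hm : 0 < m) (f : ℕ → ℂ) :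
    ∑ a ∈ Finset.Icc 1 (n * m), f a =
      ∑ k ∈ Finset.range n, ∑ l ∈ Finset.Icc 1 m, f (l + k * m) := by
  rw [← Finset.sum_product']
  refine (Finset.sum_nbij' (i := fun p : ℕ × ℕ => p.2 + p.1 * m)
    (j := fun a => ((a - 1) / m, (a - 1) % m + 1)) ?_ ?_ ?_ ?_ ?_).symm
  · rintro ⟨k, l⟩ hp
    simp only [Finset.mem_product, Finset.mem_range, Finset.mem_Icc] at hp
    obtain ⟨hk, hl1, hl2⟩ := hp
    simp only [Finset.mem_Icc]
    constructor
    · omega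
    · have : k * m ≤ (n - 1) * m := Nat.mul_le_mul_right m (by omega)
      have h2 : (n - 1) * m + m = n * m := by
        have : n - 1 + 1 = n := by omega
        calc (n - 1) * m + m = (n - 1 + 1) * m := by ring
        _ = n * m := by rw [this]
      omega
  · intro a ha
    simp only [Finset.mem_Icc] at ha
    simp only [Finset.mem_product, Finset.mem_range, Finset.mem_Icc]
    refine ⟨?_, by omega, ?_⟩
    · have h : a - 1 < m * n := by rw [Nat.mul_comm]; omega
      exact Nat.div_lt_of_lt_mul h
    · have := Nat.mod_lt (a - 1) hm
      omega
  · rintro ⟨k, l⟩ hp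
    simp only [Finset.mem_product, Finset.mem_range, Finset.mem_Icc] at hp
    obtain ⟨hk, hl1, hl2⟩ := hp
    have h1 : l + k * m - 1 = (l - 1) + k * m := by omega
    have h2 : l - 1 < m := by omega
    simp only [h1, Nat.add_mul_div_right _ _ hm, Nat.add_mul_mod_self_right,
      Nat.div_eq_of_lt h2, Nat.mod_eq_of_lt h2, Prod.mk.injEq]
    omega
  · intro a ha
    simp only [Finset.mem_Icc] at ha
    simp only
    rw [Nat.add_comm, ← Nat.add_assoc, Nat.div_add_mod' (a-1) m]
    omega
  · intro a _; rfl

lemma giff (n a x : ℕ) (hn : 0 < n) (ha1 : 1 ≤ a) (ha2 : a ≤ n) :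
    ((if x % n = 0 then n else x % n) = a) ↔ x % n = a % n := by
  have hx : x % n < n := Nat.mod_lt _ hn
  rcases eq_or_lt_of_le ha2 with rfl | hlt
  · rw [Nat.mod_self]
    split_ifs with h <;> omega
  · rw [Nat.mod_eq_of_lt hlt]
    split_ifs with h <;> omega

lemma leg_per (m : ℕ) [Fact m.Prime] (l k : ℕ) :
    legendreSym m ((l + k * m : ℕ) : ℤ) = legendreSym m l := by
  have h : ((l + k * m : ℕ) : ℤ) = (l : ℤ) + (k : ℤ) * m := by push_cast; ring
  rw [h, legendreSym.mod, Int.add_mul_emod_self_right, ← legendreSym.mod]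

lemma cast_eq_of_mod (n x a k m : ℕ) (hx : x % n = a % n) :
    (((x + k * m : ℕ)) : ZMod n) = (((a + k * (m % n) : ℕ)) : ZMod n) := by
  have h1 : (x : ZMod n) = (a : ZMod n) := by
    rw [← ZMod.natCast_mod x n, ← ZMod.natCast_mod a n, hx]
  have h2 : ((m % n : ℕ) : ZMod n) = (m : ZMod n) := ZMod.natCast_mod m n
  push_cast
  rw [h1, h2]

lemma inner_zero (n : ℕ) [NeZero n] (χ₁ : DirichletCharacter ℂ n) (hχ : χ₁ ≠ 1)
    (m l : ℕ) (hmu : IsUnit ((m : ZMod n))) :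
    ∑ k ∈ Finset.range n, χ₁ (((l + k * m : ℕ) : ZMod n)) = 0 := by
  have h1 : ∑ k ∈ Finset.range n, χ₁ (((l + k * m : ℕ) : ZMod n))
      = ∑ x : ZMod n, χ₁ ((l : ZMod n) + x * m) := by
    refine Finset.sum_nbij' (i := fun k : ℕ => (k : ZMod n)) (j := fun x => x.val)
      ?_ ?_ ?_ ?_ ?_
    · intro a _; exact Finset.mem_univ _
    · intro x _; exact Finset.mem_range.mpr (ZMod.val_lt x)
    · intro a ha; exact ZMod.val_natCast_of_lt (Finset.mem_range.mp ha)
    · intro x _; simp [ZMod.natCast_val, ZMod.cast_id]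
    · intro k _
      congr 1
      push_cast
      ring
  rw [h1]
  have hbij : Function.Bijective (fun x : ZMod n => (l : ZMod n) + x * (m : ZMod n)) := by
    have h2 : Function.Bijective (fun x : ZMod n => x * (m : ZMod n)) :=
      IsUnit.isUnit_iff_mulRight_bijective.mp hmu
    have h3 : Function.Bijective (fun y : ZMod n => (l : ZMod n) + y) :=
      (Equiv.addLeft (l : ZMod n)).bijective
    exact h3.comp h2
  have h4 : ∑ x : ZMod n, χ₁ ((l : ZMod n) + x * m) = ∑ y : ZMod n, χ₁ y :=
    Fintype.sum_bijective _ hbij _ _ (fun x => rfl)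
  rw [h4]
  exact MulChar.sum_eq_zero_of_ne_one hχ

/-- With `χ₁` odd mod `n`, `m` prime coprime to `n`, `χ₂` the Legendre symbol
mod `m`, and `α` a nonzero value of `χ₂`:
`Σ_{1≤a≤nm, χ₂(a)=α} χ₁(a)·a = m·Σ_{k=0}^{n−1} k·Σ_{a=1}^{n} χ₁(a+k[m]_n)·σ(a,α)`,
where `σ(a,α) = #{1 ≤ l ≤ m : χ₂(l) = α, l ≡ a (mod n)}`. -/
theorem gamma_alpha_eq (n m : ℕ) (hn : 1 < n) (hm : m.Prime) [Fact m.Prime]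
    (hnm : Nat.Coprime n m)
    (χ₁ : DirichletCharacter ℂ n) (hodd : χ₁ (-1) = -1)
    (α : ℤ) (hα : α = 1 ∨ α = -1) :
    ∑ a ∈ (Finset.Icc 1 (n * m)).filter (fun (a : ℕ) => legendreSym m a = α),
        χ₁ (a : ZMod n) * (a : ℂ) =
      (m : ℂ) * ∑ k ∈ Finset.range n, (k : ℂ) *
        ∑ a ∈ Finset.Icc 1 n, χ₁ ((a + k * (m % n) : ℕ) : ZMod n) *
          (((Finset.Icc 1 m).filter
            (fun (l : ℕ) => legendreSym m l = α ∧ l % n = a % n)).card : ℂ) := by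
  classical
  have hm0 : 0 < m := hm.pos
  have hn0 : 0 < n := by omega
  haveI : NeZero n := ⟨by omega⟩
  have hmu : IsUnit ((m : ZMod n)) := (ZMod.isUnit_iff_coprime m n).mpr hnm.symm
  have hχ : χ₁ ≠ 1 := by
    intro h
    rw [h, MulChar.one_apply isUnit_one.neg] at hodd
    norm_num at hodd
  set S : Finset ℕ := (Finset.Icc 1 m).filter (fun l : ℕ => legendreSym m l = α) with hS
  -- Step 1: reindex
  have step1 : ∑ a ∈ (Finset.Icc 1 (n * m)).filter (fun (a : ℕ) => legendreSym m a = α),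
      χ₁ (a : ZMod n) * (a : ℂ)
      = ∑ k ∈ Finset.range n, ∑ l ∈ S,
          χ₁ (((l + k * m : ℕ)) : ZMod n) * ((l + k * m : ℕ) : ℂ) := by
    rw [Finset.sum_filter, reindex_sum n m hn0 hm0]
    refine Finset.sum_congr rfl fun k _ => ?_
    rw [hS, Finset.sum_filter]
    refine Finset.sum_congr rfl fun l _ => ?_
    rw [leg_per]
  rw [step1]
  -- Step 2: split the inner term
  have step2 : ∑ k ∈ Finset.range n, ∑ l ∈ S,
      χ₁ (((l + k * m : ℕ)) : ZMod n) * ((l + k * m : ℕ) : ℂ)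
      = (∑ l ∈ S, (l : ℂ) * ∑ k ∈ Finset.range n, χ₁ (((l + k * m : ℕ)) : ZMod n))
        + (m : ℂ) * ∑ k ∈ Finset.range n, (k : ℂ) *
            ∑ l ∈ S, χ₁ (((l + k * m : ℕ)) : ZMod n) := by
    rw [Finset.mul_sum]
    rw [show (∑ l ∈ S, (l : ℂ) * ∑ k ∈ Finset.range n, χ₁ (((l + k * m : ℕ)) : ZMod n))
        = ∑ k ∈ Finset.range n, ∑ l ∈ S, (l : ℂ) * χ₁ (((l + k * m : ℕ)) : ZMod n) by
      rw [Finset.sum_comm]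
      exact Finset.sum_congr rfl fun l _ => by rw [Finset.mul_sum]]
    rw [← Finset.sum_add_distrib]
    refine Finset.sum_congr rfl fun k _ => ?_
    rw [Finset.mul_sum, Finset.mul_sum, ← Finset.sum_add_distrib]
    refine Finset.sum_congr rfl fun l _ => ?_
    push_cast
    ring
  rw [step2]
  -- vanishing of the first part
  have hzero : ∀ l, ∑ k ∈ Finset.range n, χ₁ (((l + k * m : ℕ)) : ZMod n) = 0 :=
    fun l => inner_zero n χ₁ hχ m l hmu
  simp only [hzero, mul_zero, Finset.sum_const_zero, zero_add]
  -- Step 3: fiberwise decomposition for each k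
  congr 1
  refine Finset.sum_congr rfl fun k _ => ?_
  congr 1
  have hmaps : ∀ l ∈ S, (if l % n = 0 then n else l % n) ∈ Finset.Icc 1 n := by
    intro l _
    have := Nat.mod_lt l hn0
    split_ifs with h <;> simp [Finset.mem_Icc] <;> omega
  rw [← Finset.sum_fiberwise_of_maps_to hmaps
    (fun l => χ₁ (((l + k * m : ℕ)) : ZMod n))]
  refine Finset.sum_congr rfl fun a ha => ?_
  rw [Finset.mem_Icc] at ha
  have hset : S.filter (fun l => (if l % n = 0 then n else l % n) = a)
      = (Finset.Icc 1 m).filter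
          (fun (l : ℕ) => legendreSym m l = α ∧ l % n = a % n) := by
    rw [hS, Finset.filter_filter]
    ext l
    simp only [Finset.mem_filter, and_assoc]
    constructor
    · rintro ⟨h1, h2, h3⟩
      exact ⟨h1, h2, (giff n a l hn0 ha.1 ha.2).mp h3⟩
    · rintro ⟨h1, h2, h3⟩
      exact ⟨h1, h2, (giff n a l hn0 ha.1 ha.2).mpr h3⟩
  rw [hset]
  have hconst : ∀ l ∈ (Finset.Icc 1 m).filter
      (fun (l : ℕ) => legendreSym m l = α ∧ l % n = a % n),
      χ₁ (((l + k * m : ℕ)) : ZMod n) = χ₁ (((a + k * (m % n) : ℕ)) : ZMod n) := by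
    intro l hl
    rw [Finset.mem_filter] at hl
    rw [cast_eq_of_mod n l a k m hl.2.2]
  rw [Finset.sum_congr rfl hconst, Finset.sum_const, nsmul_eq_mul, mul_comm]
end

section
/- Let q be a prime power, B ∈ F_q[x] of positive degree, and P ∈ F_q[x] irreducible and coprime to B·(B−1). Let a_1(x), …, a_T(x) be the digits (polynomials of degree < deg B) of one period of the (periodic) base-B expansion of 1/P in the field of Laurent series, where T is the period. Then a_1(x) + a_2(x) + ⋯ + a_T(x) = 0 in F_q[x]. -/
/-- The `k`-th digit of the base-`B` expansion of `1/P` in `F_q(x)`: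
`a_k = ⌊B^k/P⌋ − B·⌊B^{k−1}/P⌋` (polynomial Euclidean division), a polynomial
of degree `< deg B`. -/
noncomputable def polyDigit {F : Type*} [Field F] (B P : Polynomial F) (k : ℕ) :
    Polynomial F := B ^ k / P - B * (B ^ (k - 1) / P)

/-- (Rudnick) If `F` is a finite field, `B` has positive degree, `P` is
irreducible and coprime to `B(B−1)`, and the base-`B` digit sequence of `1/P`
is periodic with period `T`, then the digits over one period sum to `0`. -/
theorem sum_polyDigits_eq_zero {F : Type*} [Field F] [Fintype F]
    (B P : Polynomial F) (hB : 0 < B.natDegree) (hP : Irreducible P)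
    (hcop : IsCoprime P (B * (B - 1)))
    (T : ℕ) (hT : 0 < T)
    (hper : ∀ k, 1 ≤ k → polyDigit B P (k + T) = polyDigit B P k) :
    ∑ k ∈ Finset.Icc 1 T, polyDigit B P k = 0 := by
  classical
  set r : ℕ → Polynomial F := fun k => B ^ k % P with hr
  have hP0 : P ≠ 0 := hP.ne_zero
  have hB0 : B ≠ 0 := fun h => by simp [h] at hB
  have hdegB : (0 : WithBot ℕ) < B.degree := by
    rw [Polynomial.degree_eq_natDegree hB0]
    exact_mod_cast hB
  have hdegPbot : P.degree ≠ ⊥ := by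
    simpa [Polynomial.degree_eq_bot] using hP0
  have hdegBbot : B.degree ≠ ⊥ := by
    simpa [Polynomial.degree_eq_bot] using hB0
  have hrlt : ∀ k, (r k).degree < P.degree := fun k =>
    EuclideanDomain.mod_lt _ hP0
  -- key identity
  have key : ∀ m : ℕ, P * polyDigit B P (m + 1) = B * r m - r (m + 1) := by
    intro m
    have h1 : P * (B ^ (m + 1) / P) = B ^ (m + 1) - r (m + 1) := by
      have := EuclideanDomain.div_add_mod (B ^ (m + 1)) P
      simp only [hr]; linear_combination this
    have h2 : P * (B ^ m / P) = B ^ m - r m := by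
      have := EuclideanDomain.div_add_mod (B ^ m) P
      simp only [hr]; linear_combination this
    simp only [polyDigit, Nat.add_sub_cancel]
    rw [mul_sub, h1, mul_left_comm, h2, pow_succ]
    ring
  -- periodicity of remainders: r T = r 0
  have hd : ∀ m : ℕ, r (m + T) - r m = B ^ m * (r T - r 0) := by
    intro m
    induction m with
    | zero => simp
    | succ n ih =>
      have e1 := key (n + T)
      have e2 := key n
      have e3 := hper (n + 1) (Nat.le_add_left 1 n)
      have estep : r (n + 1 + T) - r (n + 1) = B * (r (n + T) - r n) := by
        have h5 : P * polyDigit B P (n + T + 1) = P * polyDigit B P (n + 1) := by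
          rw [show n + T + 1 = n + 1 + T by ring, e3]
        rw [e1, e2] at h5
        have h6 : n + T + 1 = n + 1 + T := by ring
        rw [h6] at h5
        linear_combination -h5
      rw [estep, ih, pow_succ]
      ring
  have hrT : r T = r 0 := by
    by_contra h0
    have h0' : r T - r 0 ≠ 0 := sub_ne_zero.mpr h0
    set n := P.natDegree with hn
    have hdn : r (n + T) - r n ≠ 0 := by
      rw [hd n]; exact mul_ne_zero (pow_ne_zero _ hB0) h0'
    have hlt : (r (n + T) - r n).natDegree < n := by
      apply Polynomial.natDegree_lt_natDegree hdn
      exact lt_of_le_of_lt (Polynomial.degree_sub_le _ _) (max_lt (hrlt _) (hrlt _))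
    have hge : n ≤ (r (n + T) - r n).natDegree := by
      rw [hd n, Polynomial.natDegree_mul (pow_ne_zero _ hB0) h0',
        Polynomial.natDegree_pow]
      calc n = n * 1 := (mul_one n).symm
        _ ≤ n * B.natDegree := Nat.mul_le_mul_left n hB
        _ ≤ n * B.natDegree + (r T - r 0).natDegree := Nat.le_add_right _ _
    omega
  -- the sum identity
  set S := ∑ k ∈ Finset.Icc 1 T, polyDigit B P k with hS
  set Q := ∑ i ∈ Finset.range T, r i with hQ
  have h1 : S = ∑ i ∈ Finset.range T, polyDigit B P (i + 1) := by
    rw [hS, ← Finset.Ico_add_one_right_eq_Icc, Finset.sum_Ico_eq_sum_range]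
    exact Finset.sum_congr rfl fun i _ => by rw [Nat.add_comm 1 i]
  have hsum : P * S = (B - 1) * Q := by
    rw [h1, Finset.mul_sum]
    rw [Finset.sum_congr rfl fun i _ => key i, Finset.sum_sub_distrib,
      ← Finset.mul_sum, ← hQ]
    have h3 : ∑ i ∈ Finset.range T, r (i + 1) = Q := by
      have h4 := Finset.sum_range_succ' r T
      rw [Finset.sum_range_succ, ← hQ, hrT] at h4
      exact (add_right_cancel h4).symm
    rw [h3]; ring
  -- P divides Q
  have hcop' : IsCoprime P (B - 1) :=
    hcop.of_isCoprime_of_dvd_right (dvd_mul_left (B - 1) B)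
  have hdvd : P ∣ (B - 1) * Q := ⟨S, by rw [← hsum]⟩
  obtain ⟨Q', hQ'⟩ := hcop'.dvd_of_dvd_mul_left hdvd
  have hSeq : S = (B - 1) * Q' := by
    apply mul_left_cancel₀ hP0
    rw [hsum, hQ']; ring
  -- degree bound on digits
  have hdig : ∀ m : ℕ, (polyDigit B P (m + 1)).degree < B.degree := by
    intro m
    by_cases ha : polyDigit B P (m + 1) = 0
    · rw [ha, Polynomial.degree_zero]
      exact bot_lt_iff_ne_bot.mpr hdegBbot
    · have hPa : (P * polyDigit B P (m + 1)).degree < P.degree + B.degree := by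
        rw [key m]
        apply lt_of_le_of_lt (Polynomial.degree_sub_le _ _)
        apply max_lt
        · rw [Polynomial.degree_mul, add_comm P.degree B.degree]
          exact (WithBot.add_lt_add_iff_left hdegBbot).mpr (hrlt m)
        · calc (r (m + 1)).degree < P.degree := hrlt (m + 1)
            _ = P.degree + 0 := (add_zero _).symm
            _ < P.degree + B.degree := (WithBot.add_lt_add_iff_left hdegPbot).mpr hdegB
      rw [Polynomial.degree_mul] at hPa
      exact (WithBot.add_lt_add_iff_left hdegPbot).mp hPa
  have hdegS : S.degree < B.degree := by
    rw [h1]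
    apply lt_of_le_of_lt (Polynomial.degree_sum_le _ _)
    rw [Finset.sup_lt_iff (bot_lt_iff_ne_bot.mpr hdegBbot)]
    exact fun i _ => hdig i
  -- conclude
  have hQ'0 : Q' = 0 := by
    by_contra hq
    have hB1 : (B - 1).degree = B.degree := by
      apply Polynomial.degree_sub_eq_left_of_degree_lt
      rw [Polynomial.degree_one]
      exact hdegB
    have : B.degree ≤ S.degree := by
      rw [hSeq, Polynomial.degree_mul, hB1]
      calc B.degree = B.degree + 0 := (add_zero _).symm
        _ ≤ B.degree + Q'.degree := by
          apply add_le_add le_rfl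
          exact Polynomial.zero_le_degree_iff.mpr hq
    exact absurd hdegS (not_lt_of_ge this)
  rw [hSeq, hQ'0, mul_zero]
end
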